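/- Let X be a Polish space equipped with its Borel σ-algebra, let I be a countable index set, for each i ∈ I let A_i be a countable type, and let S_i : X → Set A_i be maps such that for every i ∈ I and every a ∈ A_i the set { x ∈ X : a ∈ S_i(x) } is Borel. Call x and y separable if there exists i ∈ I such that S_i(x) and S_i(y) do not have the same cardinality. If there exists an uncountable subset of X whose elements are pairwise separable, then there exists a subset of X of cardinality 2^{ℵ₀} whose elements are pairwise separable. -/

import Mathlib

open Set Function ENNReal CantorScheme

lemma psp_split {Z Y : Type*} [MetricSpace Z] [SecondCountableTopology Z] [MetricSpace Y]
    {g : Z → Y} (hg : Continuous g) (E : Set Z) (hE : IsClosed E)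
    (hunc : ¬(g '' E).Countable) {ε : ℝ≥0∞} (hε : 0 < ε) :
    ∃ E₀ E₁ : Set Z,
      (IsClosed E₀ ∧ E₀ ⊆ E ∧ ¬(g '' E₀).Countable ∧ EMetric.diam E₀ ≤ ε) ∧
      (IsClosed E₁ ∧ E₁ ⊆ E ∧ ¬(g '' E₁).Countable ∧ EMetric.diam E₁ ≤ ε) ∧
      Disjoint (g '' E₀) (g '' E₁) := by
  obtain ⟨b, b_count, -, hb⟩ := TopologicalSpace.exists_countable_basis Z
  set K : Set Z := {z | z ∈ E ∧ ∀ U : Set Z, IsOpen U → z ∈ U → ¬(g '' (U ∩ E)).Countable}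
    with hKdef
  have hKE : K ⊆ E := fun z hz => hz.1
  have hKunc : ¬(g '' K).Countable := by
    intro hc
    apply hunc
    have hcover : E \ K ⊆ ⋃ U ∈ {U ∈ b | (g '' (U ∩ E)).Countable}, (U ∩ E) := by
      rintro z ⟨hzE, hzK⟩
      simp only [hKdef, mem_setOf_eq, not_and, not_forall] at hzK
      obtain ⟨U, hUopen, hzU, hUc⟩ := hzK hzE
      rw [not_not] at hUc
      obtain ⟨V, hVb, hzV, hVU⟩ := hb.exists_subset_of_mem_open hzU hUopen
      exact mem_biUnion ⟨hVb, (hUc.mono (image_mono (inter_subset_inter_left E hVU)))⟩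
        ⟨hzV, hzE⟩
    have : g '' E ⊆ g '' K ∪ ⋃ U ∈ {U ∈ b | (g '' (U ∩ E)).Countable}, g '' (U ∩ E) := by
      rintro y ⟨z, hz, rfl⟩
      by_cases hzK : z ∈ K
      · exact Or.inl (mem_image_of_mem _ hzK)
      · right
        obtain ⟨U, hU, hzU⟩ := mem_iUnion₂.1 (hcover ⟨hz, hzK⟩)
        exact mem_iUnion₂.2 ⟨U, hU, mem_image_of_mem _ hzU⟩
    refine Set.Countable.mono this (hc.union ?_)
    exact Set.Countable.biUnion (b_count.mono (sep_subset _ _)) (fun U hU => hU.2)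
  have hnt : (g '' K).Nontrivial := by
    by_contra hsub
    rw [not_nontrivial_iff] at hsub
    exact hKunc hsub.countable
  obtain ⟨y₀, ⟨z₀, hz₀, rfl⟩, y₁, ⟨z₁, hz₁, rfl⟩, hne⟩ := hnt
  set r : ℝ := dist (g z₀) (g z₁) / 3 with hrdef
  have hr : 0 < r := by
    have := dist_pos.2 hne
    positivity
  have key : ∀ (z : Z), z ∈ K →
      (IsClosed (E ∩ closure (EMetric.ball z (ε / 2)) ∩ g ⁻¹' (Metric.closedBall (g z) r)) ∧
       (E ∩ closure (EMetric.ball z (ε / 2)) ∩ g ⁻¹' (Metric.closedBall (g z) r)) ⊆ E ∧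
       ¬(g '' (E ∩ closure (EMetric.ball z (ε / 2)) ∩
          g ⁻¹' (Metric.closedBall (g z) r))).Countable ∧
       EMetric.diam (E ∩ closure (EMetric.ball z (ε / 2)) ∩
          g ⁻¹' (Metric.closedBall (g z) r)) ≤ ε ∧
       g '' (E ∩ closure (EMetric.ball z (ε / 2)) ∩ g ⁻¹' (Metric.closedBall (g z) r)) ⊆
          Metric.closedBall (g z) r) := by
    intro z hz
    refine ⟨(hE.inter isClosed_closure).inter (Metric.isClosed_closedBall.preimage hg),
      fun w hw => hw.1.1, ?_, ?_, ?_⟩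
    · have hopen : IsOpen (EMetric.ball z (ε / 2) ∩ g ⁻¹' (Metric.ball (g z) r)) :=
        EMetric.isOpen_ball.inter (Metric.isOpen_ball.preimage hg)
      have hmem : z ∈ EMetric.ball z (ε / 2) ∩ g ⁻¹' (Metric.ball (g z) r) :=
        ⟨EMetric.mem_ball_self (ENNReal.div_pos hε.ne' ENNReal.ofNat_ne_top),
          Metric.mem_ball_self hr⟩
      have := hz.2 _ hopen hmem
      intro hc
      apply this
      refine hc.mono (image_mono ?_)
      rintro w ⟨⟨hw1, hw2⟩, hwE⟩
      exact ⟨⟨hwE, subset_closure hw1⟩, Metric.ball_subset_closedBall hw2⟩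
    · calc EMetric.diam _ ≤ EMetric.diam (closure (EMetric.ball z (ε / 2))) :=
            EMetric.diam_mono (fun w hw => hw.1.2)
        _ = EMetric.diam (EMetric.ball z (ε / 2)) := EMetric.diam_closure _
        _ ≤ 2 * (ε / 2) := EMetric.diam_ball
        _ = ε := ENNReal.mul_div_cancel two_ne_zero ENNReal.ofNat_ne_top
    · rintro y ⟨w, hw, rfl⟩
      exact hw.2
  obtain ⟨c₀, s₀, u₀, d₀, i₀⟩ := key z₀ hz₀
  obtain ⟨c₁, s₁, u₁, d₁, i₁⟩ := key z₁ hz₁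
  refine ⟨_, _, ⟨c₀, s₀, u₀, d₀⟩, ⟨c₁, s₁, u₁, d₁⟩, ?_⟩
  refine Disjoint.mono i₀ i₁ (Metric.closedBall_disjoint_closedBall ?_)
  rw [hrdef]
  have := dist_pos.2 hne
  linarith

lemma psp_range {Z Y : Type*} [TopologicalSpace Z] [PolishSpace Z]
    [TopologicalSpace Y] [PolishSpace Y] (g : Z → Y) (hg : Continuous g)
    (hunc : ¬(Set.range g).Countable) :
    ∃ h : (ℕ → Bool) → Z, Function.Injective (g ∘ h) := by
  letI := TopologicalSpace.upgradeIsCompletelyMetrizable Z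
  letI := TopologicalSpace.upgradeIsCompletelyMetrizable Y
  obtain ⟨u, -, upos', hu⟩ := exists_seq_strictAnti_tendsto' (zero_lt_one' ℝ≥0∞)
  have upos := fun n => (upos' n).1
  let P := {E : Set Z // IsClosed E ∧ ¬(g '' E).Countable}
  choose E0 E1 h0 h1 hdisj using
    fun {E : Set Z} (hE : IsClosed E) (hunc : ¬(g '' E).Countable) {ε : ℝ≥0∞} (hε : 0 < ε) =>
    psp_split hg E hE hunc hε
  let DP : List Bool → P := fun l => by
    induction' l with a l ih
    · exact ⟨univ, isClosed_univ, by rwa [image_univ]⟩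
    cases a
    · exact ⟨E0 ih.property.1 ih.property.2 (upos (l.length + 1)),
        (h0 _ _ _).1, (h0 _ _ _).2.2.1⟩
    · exact ⟨E1 ih.property.1 ih.property.2 (upos (l.length + 1)),
        (h1 _ _ _).1, (h1 _ _ _).2.2.1⟩
  let D : List Bool → Set Z := fun l => (DP l).val
  have hanti : ClosureAntitone D := by
    refine Antitone.closureAntitone ?_ fun l => (DP l).property.1
    intro l a
    cases a
    · exact (h0 _ _ _).2.1
    · exact (h1 _ _ _).2.1
  have hdiam : VanishingDiam D := by
    intro x
    apply tendsto_of_tendsto_of_tendsto_of_le_of_le' tendsto_const_nhds hu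
    · simp
    rw [Filter.eventually_atTop]
    refine ⟨1, fun m (hm : 1 ≤ m) => ?_⟩
    rw [Nat.one_le_iff_ne_zero] at hm
    rcases Nat.exists_eq_succ_of_ne_zero hm with ⟨n, rfl⟩
    dsimp only [D]
    rw [PiNat.res_succ]
    cases x n
    · have := (h0 (DP (PiNat.res x n)).property.1 (DP (PiNat.res x n)).property.2
        (upos ((PiNat.res x n).length + 1))).2.2.2
      calc _ ≤ u ((PiNat.res x n).length + 1) := this
        _ = _ := by rw [PiNat.res_length]
    · have := (h1 (DP (PiNat.res x n)).property.1 (DP (PiNat.res x n)).property.2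
        (upos ((PiNat.res x n).length + 1))).2.2.2
      calc _ ≤ u ((PiNat.res x n).length + 1) := this
        _ = _ := by rw [PiNat.res_length]
  have hnonempty : ∀ l, (D l).Nonempty := by
    intro l
    rw [nonempty_iff_ne_empty]
    intro hem
    apply (DP l).property.2
    rw [show (DP l).val = (∅ : Set Z) from hem]
    simp
  have hdisj' : ∀ l : List Bool, ∀ a b : Bool, a ≠ b →
      Disjoint (g '' D (a :: l)) (g '' D (b :: l)) := by
    rintro l (_ | _) (_ | _) hab <;> try exact absurd rfl hab
    · exact hdisj _ _ _
    · exact (hdisj _ _ _).symm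
  have hdom : ∀ {x : ℕ → Bool}, x ∈ (inducedMap D).1 := fun {x} => by
    rw [hanti.map_of_vanishingDiam hdiam hnonempty]
    apply mem_univ
  refine ⟨fun x => (inducedMap D).2 ⟨x, hdom⟩, ?_⟩
  intro x y hxy
  simp only [comp_apply] at hxy
  have hres : ∀ n, PiNat.res x n = PiNat.res y n := by
    intro n
    induction' n with n ih
    · simp
    rw [PiNat.res_succ, PiNat.res_succ, ih]
    congr 1
    by_contra hne
    have hx1 : g ((inducedMap D).2 ⟨x, hdom⟩) ∈ g '' D (x n :: PiNat.res y n) := by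
      apply mem_image_of_mem
      have := map_mem (A := D) ⟨x, hdom⟩ (n + 1)
      rwa [PiNat.res_succ, ih] at this
    have hy1 : g ((inducedMap D).2 ⟨x, hdom⟩) ∈ g '' D (y n :: PiNat.res y n) := by
      rw [hxy]
      apply mem_image_of_mem
      have := map_mem (A := D) ⟨y, hdom⟩ (n + 1)
      rwa [PiNat.res_succ] at this
    exact Set.disjoint_left.1 (hdisj' (PiNat.res y n) _ _ hne) hx1 hy1
  funext n
  have h2 := hres (n + 1)
  rw [PiNat.res_succ, PiNat.res_succ, List.cons.injEq] at h2
  exact h2.1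

lemma card_eq_of_nat_le_iff {c d : Cardinal} (hc : c ≤ Cardinal.aleph0)
    (hd : d ≤ Cardinal.aleph0)
    (hiff : ∀ n : ℕ, ((n : Cardinal) ≤ c ↔ (n : Cardinal) ≤ d)) : c = d := by
  have key : ∀ c d : Cardinal, d ≤ Cardinal.aleph0 →
      (∀ n : ℕ, ((n : Cardinal) ≤ c ↔ (n : Cardinal) ≤ d)) → ¬ c < d := by
    intro c d hd hiff hlt
    obtain ⟨n, rfl⟩ := Cardinal.lt_aleph0.1 (hlt.trans_le hd)
    have h1 : ((n + 1 : ℕ) : Cardinal) ≤ d := by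
      rw [show n + 1 = n.succ from rfl, Cardinal.nat_succ]
      exact Order.succ_le_of_lt hlt
    have h2 := (hiff (n + 1)).2 h1
    rw [Nat.cast_le] at h2
    omega
  exact le_antisymm (not_lt.1 (key d c hc (fun n => (hiff n).symm)))
    (not_lt.1 (key c d hd hiff))

theorem continuum_many_pairwise_separable (X : Type*) [TopologicalSpace X] [PolishSpace X]
    [MeasurableSpace X] [BorelSpace X]
    (I : Type*) [Countable I] (A : I → Type*) [∀ i, Countable (A i)]
    (S : ∀ i : I, X → Set (A i))
    (h : ∀ (i : I) (a : A i), MeasurableSet {x : X | a ∈ S i x})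
    (huncount : ∃ T : Set X, ¬ T.Countable ∧
      ∀ x ∈ T, ∀ y ∈ T, x ≠ y → ∃ i : I, Cardinal.mk (S i x) ≠ Cardinal.mk (S i y)) :
    ∃ T : Set X, Cardinal.mk T = Cardinal.continuum ∧
      ∀ x ∈ T, ∀ y ∈ T, x ≠ y → ∃ i : I, Cardinal.mk (S i x) ≠ Cardinal.mk (S i y) := by
  classical
  obtain ⟨T₀, hT₀unc, hT₀sep⟩ := huncount
  set Y := (I × ℕ) → Bool with hYdef
  set f : X → Y := fun x p => decide ((p.2 : Cardinal) ≤ Cardinal.mk (S p.1 x)) with hfdef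
  -- each "at least n elements" set is measurable
  have hG : ∀ (i : I) (n : ℕ), MeasurableSet {x : X | (n : Cardinal) ≤ Cardinal.mk (S i x)} := by
    intro i n
    have heq : {x : X | (n : Cardinal) ≤ Cardinal.mk (S i x)} =
        ⋃ g : {g : Fin n → A i // Function.Injective g},
          ⋂ k : Fin n, {x : X | g.1 k ∈ S i x} := by
      ext x
      simp only [mem_setOf_eq, mem_iUnion, mem_iInter]
      constructor
      · intro hle
        have hle' : Cardinal.mk (ULift (Fin n)) ≤ Cardinal.mk (S i x) := by
          rwa [Cardinal.mk_uLift, Cardinal.mk_fin, Cardinal.lift_natCast]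
        obtain ⟨e⟩ := (Cardinal.le_def _ _).1 hle'
        refine ⟨⟨fun k => (e ⟨k⟩).1, fun a b hab => ?_⟩, fun k => (e ⟨k⟩).2⟩
        have h2 := e.injective (Subtype.ext hab)
        exact congrArg ULift.down h2
      · rintro ⟨⟨g, hginj⟩, hgmem⟩
        have hle' : Cardinal.mk (ULift (Fin n)) ≤ Cardinal.mk (S i x) :=
          (Cardinal.le_def _ _).2 ⟨⟨fun k => ⟨g k.down, hgmem k.down⟩,
            fun a b hab => ULift.down_injective (hginj (congrArg Subtype.val hab))⟩⟩
        rwa [Cardinal.mk_uLift, Cardinal.mk_fin, Cardinal.lift_natCast] at hle'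
    rw [heq]
    exact MeasurableSet.iUnion fun g => MeasurableSet.iInter fun k => h i (g.1 k)
  have hf : Measurable f := by
    apply measurable_pi_lambda
    intro p
    apply measurable_to_countable'
    intro b
    cases b
    · have : (fun x => decide ((p.2 : Cardinal) ≤ Cardinal.mk (S p.1 x))) ⁻¹' {false} =
          {x : X | (p.2 : Cardinal) ≤ Cardinal.mk (S p.1 x)}ᶜ := by
        ext x; simp [decide_eq_false_iff_not]
      rw [this]
      exact (hG p.1 p.2).compl
    · have : (fun x => decide ((p.2 : Cardinal) ≤ Cardinal.mk (S p.1 x))) ⁻¹' {true} =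
          {x : X | (p.2 : Cardinal) ≤ Cardinal.mk (S p.1 x)} := by
        ext x; simp [decide_eq_true_iff]
      rw [this]
      exact hG p.1 p.2
  -- f x = f y implies all cardinalities coincide
  have hcard : ∀ x y : X, f x = f y → ∀ i : I, Cardinal.mk (S i x) = Cardinal.mk (S i y) := by
    intro x y hxy i
    refine card_eq_of_nat_le_iff Cardinal.mk_le_aleph0 Cardinal.mk_le_aleph0 fun n => ?_
    have := congrFun hxy (i, n)
    simpa only [hfdef, decide_eq_decide] using this
  -- the range of f is uncountable
  have hrange : ¬(Set.range f).Countable := by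
    intro hc
    apply hT₀unc
    haveI := hc.to_subtype
    have hFinj : Function.Injective (fun x : T₀ => (⟨f x, mem_range_self _⟩ : Set.range f)) := by
      intro a b hab
      by_contra hne
      obtain ⟨i, hi⟩ := hT₀sep a a.2 b b.2 (fun hh => hne (Subtype.ext hh))
      exact hi (hcard _ _ (congrArg Subtype.val hab) i)
    rw [← Set.countable_coe_iff]
    exact hFinj.countable
  obtain ⟨t', ht'le, hcont, hpolish⟩ := hf.exists_continuous
  obtain ⟨hh, hinj⟩ := @psp_range X Y t' hpolish _
    (by have : TopologicalSpace.SeparableSpace Y := inferInstance; infer_instance) f hcont hrange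
  have hhinj : Function.Injective hh := fun a b hab => hinj (by simp [Function.comp, hab])
  refine ⟨Set.range hh, ?_, ?_⟩
  · have h1 := Cardinal.mk_range_eq_of_injective hhinj
    have h2 : Cardinal.mk (ℕ → Bool) = Cardinal.continuum := by
      rw [← Cardinal.power_def, Cardinal.mk_bool, Cardinal.mk_nat, Cardinal.two_power_aleph0]
    rwa [Cardinal.lift_uzero, h2, Cardinal.lift_continuum] at h1
  · rintro x ⟨σ, rfl⟩ y ⟨τ, rfl⟩ hne
    by_contra hnone
    push_neg at hnone
    have hfeq : f (hh σ) = f (hh τ) := by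
      funext p
      simp only [hfdef, hnone p.1]
    exact hne (by rw [hinj hfeq])
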